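/- Let (γₙ) be a sequence in PSL(2,ℝ) and let η⁺, η⁻ ∈ ∂ℍ. Assume that for every z ∈ ℍ one has γₙ·z → η⁺ and γₙ⁻¹·z → η⁻ in the compactification ℍ ∪ ∂ℍ (viewed inside ℂ ∪ {∞}). Then for every ξ ∈ ∂ℍ with ξ ≠ η⁻, the sequence γₙ(ξ) converges to η⁺ in ∂ℍ. -/

import Mathlib

noncomputable section

open Matrix MatrixGroups MeasureTheory Filter Topology OnePoint
open scoped UpperHalfPlane

/-- `SL(2, ℝ)`. -/
abbrev SL2 : Type := Matrix.SpecialLinearGroup (Fin 2) ℝ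

/-- `PSL(2, ℝ) = SL(2, ℝ)/{±1}`, the quotient of `SL(2, ℝ)` by its center. -/
abbrev PSL2 : Type := Matrix.ProjectiveSpecialLinearGroup (Fin 2) ℝ

/-- Topology on `SL(2, ℝ)`, induced from the space of matrices. -/
instance : TopologicalSpace SL2 :=
  TopologicalSpace.induced (fun g : SL2 => (g : Matrix (Fin 2) (Fin 2) ℝ)) inferInstance

/-- The quotient topology on `PSL(2, ℝ)`. -/
instance : TopologicalSpace PSL2 := instTopologicalSpaceQuotient

instance : MeasurableSpace PSL2 := borel PSL2

/-- The group `G = PSL(2, ℝ) × PSL(2, ℝ)`. -/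
abbrev G2 : Type := PSL2 × PSL2

/-- The projection `SL(2, ℝ) → PSL(2, ℝ)`. -/
def pr : SL2 →* PSL2 := QuotientGroup.mk' (Subgroup.center SL2)

/-- A representative in `SL(2, ℝ)` of an element of `PSL(2, ℝ)`.  (All the constructions
below built from `rep` are in fact independent of the choice of representative, because the
two lifts of an element of `PSL(2, ℝ)` differ only by sign.) -/
def rep (x : PSL2) : SL2 := Quotient.out x

/-- The boundary `∂ℍ = ℝ ∪ {∞}` of the upper half-plane. -/
abbrev Bdry : Type := OnePoint ℝ

/-- The extended Möbius action of `SL(2, ℝ)` on `∂ℍ = ℝ ∪ {∞}`. -/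
def mobSL (g : SL2) (p : Bdry) : Bdry :=
  p.elim (if g 1 0 = 0 then ∞ else ((g 0 0 / g 1 0 : ℝ) : Bdry))
    (fun x => if g 1 0 * x + g 1 1 = 0 then ∞
      else (((g 0 0 * x + g 0 1) / (g 1 0 * x + g 1 1) : ℝ) : Bdry))

/-- The extended Möbius action of `PSL(2, ℝ)` on the boundary `∂ℍ = ℝ ∪ {∞}`
(independent of the choice of representative, since `-g` and `g` act alike). -/
def mob (x : PSL2) (p : Bdry) : Bdry := mobSL (rep x) p

/-- The Möbius action of `PSL(2, ℝ)` on the upper half-plane `ℍ`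
(independent of the choice of representative, since `-g` and `g` act alike). -/
def hact (x : PSL2) (z : ℍ) : ℍ := rep x • z

/-- The componentwise action of `G` on `ℍ × ℍ`. -/
def hact2 (x : G2) (z : ℍ × ℍ) : ℍ × ℍ := (hact x.1 z.1, hact x.2 z.2)

/-- The componentwise action of `G` on the Furstenberg boundary `F = ∂ℍ × ∂ℍ`. -/
def mob2 (x : G2) (ξ : Bdry × Bdry) : Bdry × Bdry := (mob x.1 ξ.1, mob x.2 ξ.2)

/-- The diagonal matrix `diag (exp t, exp (-t))` in `SL(2, ℝ)`; as `t` ranges over `ℝ`,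
these (together with their negatives) are exactly the diagonal matrices `±diag (λ, λ⁻¹)`
with `λ > 0`. -/
def dm (t : ℝ) : SL2 :=
  ⟨!![Real.exp t, 0; 0, Real.exp (-t)], by
    simp [Matrix.det_fin_two_of, ← Real.exp_add]⟩

lemma dm_mul (t s : ℝ) : dm t * dm s = dm (t + s) := by
  apply Subtype.ext
  rw [Matrix.SpecialLinearGroup.coe_mul]
  show !![Real.exp t, 0; 0, Real.exp (-t)] * !![Real.exp s, 0; 0, Real.exp (-s)] =
    !![Real.exp (t + s), 0; 0, Real.exp (-(t + s))]
  rw [Matrix.mul_fin_two]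
  norm_num [← Real.exp_add]
  ring_nf

lemma dm_zero : dm 0 = 1 := by
  apply Subtype.ext
  simp [dm, Matrix.one_fin_two]

/-- The maximal diagonal subgroup `A` of `G = PSL(2, ℝ) × PSL(2, ℝ)`. -/
def Adiag : Subgroup G2 where
  carrier := {x | ∃ t s : ℝ, x = (pr (dm t), pr (dm s))}
  mul_mem' := by
    rintro _ _ ⟨t, s, rfl⟩ ⟨t', s', rfl⟩
    exact ⟨t + t', s + s', by simp [Prod.ext_iff, ← _root_.map_mul, dm_mul]⟩
  one_mem' := ⟨0, 0, by simp [dm_zero, Prod.ext_iff]⟩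
  inv_mem' := by
    rintro _ ⟨t, s, rfl⟩
    refine ⟨-t, -s, ?_⟩
    have h1 : dm (-t) * dm t = 1 := by rw [dm_mul]; simpa using dm_zero
    have h2 : dm (-s) * dm s = 1 := by rw [dm_mul]; simpa using dm_zero
    simp [Prod.ext_iff, eq_comm, eq_inv_iff_mul_eq_one, ← _root_.map_mul, h1, h2]

/-- The diagonal sub-semigroup `A⁺` of `G` (diagonal entries `λᵢ = exp tᵢ ≥ 1`). -/
def Apos : Set G2 := {x | ∃ t s : ℝ, 0 ≤ t ∧ 0 ≤ s ∧ x = (pr (dm t), pr (dm s))}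

/-- The absolute value of the trace, well defined on `PSL(2, ℝ)`. -/
def trAbs (x : PSL2) : ℝ := |((rep x : Matrix (Fin 2) (Fin 2) ℝ)).trace|

/-- An element of `PSL(2, ℝ)` is hyperbolic if `|trace| > 2`. -/
def IsHyperbolicPSL (x : PSL2) : Prop := 2 < trAbs x

/-- An element of `PSL(2, ℝ)` is parabolic if it is nontrivial and `|trace| = 2`. -/
def IsParabolicPSL (x : PSL2) : Prop := x ≠ 1 ∧ trAbs x = 2

/-- An element of `PSL(2, ℝ)` is elliptic if `|trace| < 2`. -/
def IsEllipticPSL (x : PSL2) : Prop := trAbs x < 2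

/-- The dominant eigenvalue `(|tr| + √(tr² - 4))/2` of (a lift of) an element of
`PSL(2, ℝ)`; for a hyperbolic element this is its dominant (> 1) eigenvalue. -/
def domEig (x : PSL2) : ℝ := (trAbs x + Real.sqrt (trAbs x ^ 2 - 4)) / 2

/-- An element of `G` is hyperbolic if both components are. -/
def IsHyperbolicG (γ : G2) : Prop := IsHyperbolicPSL γ.1 ∧ IsHyperbolicPSL γ.2

/-- An element of `G` is parabolic if both components are. -/
def IsParabolicG (γ : G2) : Prop := IsParabolicPSL γ.1 ∧ IsParabolicPSL γ.2

/-- An element of `G` is elliptic if both components are. -/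
def IsEllipticG (γ : G2) : Prop := IsEllipticPSL γ.1 ∧ IsEllipticPSL γ.2

/-- A nontrivial element of `G` is mixed if its two components are not of the same kind. -/
def IsMixed (γ : G2) : Prop :=
  γ ≠ 1 ∧ ¬ IsHyperbolicG γ ∧ ¬ IsParabolicG γ ∧ ¬ IsEllipticG γ

/-- A hyperbolic element of `G` is hyper-regular if the dominant eigenvalues of its two
components are distinct. -/
def IsHyperRegular (γ : G2) : Prop := IsHyperbolicG γ ∧ domEig γ.1 ≠ domEig γ.2

/-- `Γ` is an irreducible lattice of `G = PSL(2, ℝ) × PSL(2, ℝ)`: it is discrete, of finite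
covolume for Haar measure, both coordinate projections have dense image, and `Γ` meets the
kernel of each coordinate projection trivially. -/
structure IsIrreducibleLattice (Γ : Subgroup G2) : Prop where
  discrete : DiscreteTopology Γ
  finiteCovolume : ∃ μ : Measure G2, μ.IsHaarMeasure ∧
    ∃ s : Set G2, IsFundamentalDomain Γ s μ ∧ μ s < ⊤
  dense_fst : Dense (Prod.fst '' (Γ : Set G2))
  dense_snd : Dense (Prod.snd '' (Γ : Set G2))
  ker_fst : ∀ γ ∈ Γ, γ.1 = 1 → γ = 1
  ker_snd : ∀ γ ∈ Γ, γ.2 = 1 → γ = 1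

/-- The quotient `Γ \ G` by right cosets, with the quotient topology. -/
abbrev RQ (Γ : Subgroup G2) : Type := Quotient (QuotientGroup.rightRel Γ)

/-- The class `Γ g` of `g` in `Γ \ G`. -/
def rmk (Γ : Subgroup G2) (g : G2) : RQ Γ := Quotient.mk (QuotientGroup.rightRel Γ) g

/-- The orbit `x A` of `x = Γ g` in `Γ \ G` under right translation by `A`. -/
def orbA (Γ : Subgroup G2) (g : G2) : Set (RQ Γ) := {y | ∃ a ∈ Adiag, y = rmk Γ (g * a)}

/-- The semi-orbit `x A⁺` of `x = Γ g` in `Γ \ G` under right translation by `A⁺`. -/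
def orbApos (Γ : Subgroup G2) (g : G2) : Set (RQ Γ) := {y | ∃ a ∈ Apos, y = rmk Γ (g * a)}

/-- The inclusion `ℍ ⊆ ℂ ∪ {∞}` into the one-point compactification of `ℂ`. -/
def hToC (z : ℍ) : OnePoint ℂ := ((z : ℂ) : OnePoint ℂ)

/-- The inclusion `∂ℍ = ℝ ∪ {∞} ⊆ ℂ ∪ {∞}`. -/
def bToC (p : Bdry) : OnePoint ℂ := OnePoint.map (fun x : ℝ => (x : ℂ)) p


section Aux

open UpperHalfPlane

lemma pr_rep (x : PSL2) : pr (rep x) = x := Quotient.out_eq x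

lemma coe_smul_SL2 (u : SL2) (z : ℍ) :
    ((u • z : ℍ) : ℂ) =
      ((u 0 0 : ℝ) * (z : ℂ) + (u 0 1 : ℝ)) / ((u 1 0 : ℝ) * (z : ℂ) + (u 1 1 : ℝ)) := by
  rw [UpperHalfPlane.specialLinearGroup_apply]
  simp

lemma denom_ne_zero_SL2 (u : SL2) (z : ℍ) :
    ((u 1 0 : ℝ) : ℂ) * (z : ℂ) + ((u 1 1 : ℝ) : ℂ) ≠ 0 := by
  have hv : ![u 1 0, u 1 1] ≠ 0 := by
    intro h0
    have h1 : u 1 0 = 0 := congrFun h0 0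
    have h2 : u 1 1 = 0 := congrFun h0 1
    have hd := u.2
    rw [Matrix.det_fin_two] at hd
    rw [h1, h2] at hd
    simp at hd
  simpa using UpperHalfPlane.linear_ne_zero (cd := ![u 1 0, u 1 1]) z hv

lemma smul_eq_of_pr_eq {g1 g2 : SL2} (hpr : pr g1 = pr g2) (z : ℍ) : g1 • z = g2 • z := by
  obtain ⟨c, hc, hmul⟩ := (QuotientGroup.mk'_eq_mk' _).mp hpr
  obtain ⟨r, hr1, hr2⟩ := Matrix.SpecialLinearGroup.mem_center_iff.mp hc
  have hrne : r ≠ 0 := by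
    intro h
    rw [h] at hr1
    simp at hr1
  have hent : ∀ i j, g2 i j = r * g1 i j := by
    intro i j
    have hcoe : (g2 : Matrix (Fin 2) (Fin 2) ℝ)
        = (g1 : Matrix (Fin 2) (Fin 2) ℝ) * Matrix.scalar (Fin 2) r := by
      rw [← hmul, Matrix.SpecialLinearGroup.coe_mul, hr2]
    have := congrFun (congrFun hcoe i) j
    simpa [Matrix.scalar, Matrix.mul_diagonal, mul_comm] using this
  have d1 := denom_ne_zero_SL2 g1 z
  have d2 := denom_ne_zero_SL2 g2 z
  apply UpperHalfPlane.ext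
  rw [coe_smul_SL2, coe_smul_SL2, div_eq_div_iff d1 d2,
    hent 0 0, hent 0 1, hent 1 0, hent 1 1]
  push_cast
  ring

end Aux


section Aux2

open UpperHalfPlane

lemma hToC_ne_bToC (z : ℍ) (p : Bdry) : hToC z ≠ bToC p := by
  cases p with
  | none =>
    simp only [hToC, bToC, OnePoint.map_infty]
    exact OnePoint.coe_ne_infty _
  | some x =>
    intro hzx
    have hzx' : ((z : ℂ) : OnePoint ℂ) = (((x : ℝ) : ℂ) : OnePoint ℂ) := hzx
    have hzx'' := OnePoint.coe_eq_coe.mp hzx'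
    have him : (z : ℂ).im = 0 := by rw [hzx'']; simp
    exact (z.im_pos.ne') him

lemma tendsto_onePoint_infty_of_norm {f : ℕ → ℂ}
    (h : Tendsto (fun n => ‖f n‖) atTop atTop) :
    Tendsto (fun n => (f n : OnePoint ℂ)) atTop (𝓝 ∞) := by
  apply (OnePoint.tendsto_coe_infty (X := ℂ)).comp
  rw [Filter.coclosedCompact_eq_cocompact, ← Metric.cobounded_eq_cocompact]
  exact tendsto_norm_atTop_iff_cobounded.mp h

lemma real_mul_eq_real {p q : ℝ} {z : ℂ} (hz : z.im ≠ 0)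
    (h : (p : ℂ) * z = (q : ℂ)) : p = 0 ∧ q = 0 := by
  by_cases hp : p = 0
  · refine ⟨hp, ?_⟩
    rw [hp] at h
    simp only [Complex.ofReal_zero, zero_mul] at h
    exact_mod_cast h.symm
  · exfalso
    have hp' : (p : ℂ) ≠ 0 := Complex.ofReal_ne_zero.mpr hp
    have hz' : z = ((q / p : ℝ) : ℂ) := by
      rw [Complex.ofReal_div, eq_div_iff hp']
      linear_combination h
    apply hz
    rw [hz']
    simp

lemma real_combo_eq_zero {C D : ℝ} {z : ℂ} (hz : z.im ≠ 0)
    (h : (C : ℂ) * z + (D : ℂ) = 0) : C = 0 ∧ D = 0 := by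
  have h' : ((C : ℝ) : ℂ) * z = ((-D : ℝ) : ℂ) := by
    push_cast
    linear_combination h
  obtain ⟨h1, h2⟩ := real_mul_eq_real hz h'
  exact ⟨h1, by linarith⟩

lemma combo_real {A B C D r : ℝ} {z : ℂ} (hz : z.im ≠ 0)
    (h : (A : ℂ) * z + (B : ℂ) = (r : ℂ) * ((C : ℂ) * z + (D : ℂ))) :
    A = r * C ∧ B = r * D := by
  have h' : ((A - r * C : ℝ) : ℂ) * z = ((r * D - B : ℝ) : ℂ) := by
    push_cast
    linear_combination h
  obtain ⟨h1, h2⟩ := real_mul_eq_real hz h'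
  exact ⟨by linarith, by linarith⟩

end Aux2


section Aux3

open UpperHalfPlane

lemma exists_subseq_entries (b : ℝ) (u : ℕ → Fin 4 → ℝ) (hb : ∀ n i, |u n i| ≤ b) :
    ∃ (L : Fin 4 → ℝ) (ψ : ℕ → ℕ), StrictMono ψ ∧
      ∀ i, Tendsto (fun n => u (ψ n) i) atTop (𝓝 (L i)) := by
  have hb0 : 0 ≤ b := le_trans (abs_nonneg _) (hb 0 0)
  have hmem : ∀ n, u n ∈ Metric.closedBall (0 : Fin 4 → ℝ) b := by
    intro n
    rw [Metric.mem_closedBall, dist_zero_right]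
    refine (pi_norm_le_iff_of_nonneg hb0).mpr fun i => ?_
    rw [Real.norm_eq_abs]
    exact hb n i
  obtain ⟨L, _, ψ, hψ, hconv⟩ :=
    tendsto_subseq_of_bounded Metric.isBounded_closedBall hmem
  exact ⟨L, ψ, hψ, fun i => tendsto_pi_nhds.mp hconv i⟩

lemma bdry_helper_fin {num den N : ℕ → ℝ} (hN : ∀ n, 0 < N n) {nux dex : ℝ}
    (hnum : Tendsto (fun n => num n / N n) atTop (𝓝 nux))
    (hden : Tendsto (fun n => den n / N n) atTop (𝓝 dex)) (hdex : dex ≠ 0) :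
    Tendsto (fun n => if den n = 0 then (∞ : Bdry) else ((num n / den n : ℝ) : Bdry))
      atTop (𝓝 ((nux / dex : ℝ) : Bdry)) := by
  have hev : ∀ᶠ n in atTop, den n ≠ 0 := by
    filter_upwards [hden.eventually (eventually_ne_nhds hdex)] with n hn
    intro h0
    rw [h0, zero_div] at hn
    exact hn rfl
  have h2 : Tendsto (fun n => num n / den n) atTop (𝓝 (nux / dex)) := by
    refine (hnum.div hden hdex).congr fun n => ?_
    show num n / N n / (den n / N n) = num n / den n
    rw [div_div_div_comm, div_self (hN n).ne', div_one]
  have h3 := ((OnePoint.continuous_coe (X := ℝ)).tendsto _).comp h2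
  refine Filter.Tendsto.congr' ?_ h3
  filter_upwards [hev] with n hn
  exact (if_neg hn).symm

lemma bdry_helper_inf {num den N : ℕ → ℝ} (hN : ∀ n, 0 < N n) {nux : ℝ}
    (hnum : Tendsto (fun n => num n / N n) atTop (𝓝 nux))
    (hden : Tendsto (fun n => den n / N n) atTop (𝓝 0)) (hnux : nux ≠ 0) :
    Tendsto (fun n => if den n = 0 then (∞ : Bdry) else ((num n / den n : ℝ) : Bdry))
      atTop (𝓝 ∞) := by
  rw [OnePoint.hasBasis_nhds_infty.tendsto_right_iff]
  rintro s ⟨-, hscp⟩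
  obtain ⟨M0, hM0⟩ := isBounded_iff_forall_norm_le.mp hscp.isBounded
  set K : ℝ := max M0 0 with hK
  have hK0 : 0 ≤ K := le_max_right _ _
  have hMs : ∀ x ∈ s, |x| ≤ K := fun x hx =>
    le_trans (le_of_eq (Real.norm_eq_abs x).symm) (le_trans (hM0 x hx) (le_max_left _ _))
  set ε : ℝ := |nux| / (2 * (K + 1)) with hε
  have hnux0 : 0 < |nux| := abs_pos.mpr hnux
  have hεpos : 0 < ε := by positivity
  have h1 : ∀ᶠ n in atTop, |nux| / 2 ≤ |num n / N n| := by
    have habs : Tendsto (fun n => |num n / N n|) atTop (𝓝 |nux|) := hnum.abs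
    filter_upwards [habs.eventually (eventually_gt_nhds (by linarith : |nux| / 2 < |nux|))]
      with n hn
    exact hn.le
  have h2 : ∀ᶠ n in atTop, |den n / N n| < ε := by
    have habs : Tendsto (fun n => |den n / N n|) atTop (𝓝 0) := by
      simpa using hden.abs
    exact habs.eventually (eventually_lt_nhds hεpos)
  filter_upwards [h1, h2] with n hn1 hn2
  by_cases hd : den n = 0
  · rw [if_pos hd]
    exact Set.mem_union_right _ rfl
  · rw [if_neg hd]
    refine Set.mem_union_left _ ⟨num n / den n, ?_, rfl⟩
    intro hmem
    have hqeq : num n / den n = (num n / N n) / (den n / N n) := by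
      rw [div_div_div_comm, div_self (hN n).ne', div_one]
    have hdpos : 0 < |den n / N n| := abs_pos.mpr (div_ne_zero hd (hN n).ne')
    have hbig : K + 1 ≤ |num n / den n| := by
      rw [hqeq, abs_div, le_div_iff₀ hdpos]
      calc (K + 1) * |den n / N n| ≤ (K + 1) * ε := by
            apply mul_le_mul_of_nonneg_left hn2.le (by linarith)
        _ = |nux| / 2 := by
            rw [hε]
            field_simp
        _ ≤ |num n / N n| := hn1
    have := hMs _ hmem
    linarith

lemma inv_entries (u : SL2) :
    u⁻¹ 0 0 = u 1 1 ∧ u⁻¹ 0 1 = -u 0 1 ∧ u⁻¹ 1 0 = -u 1 0 ∧ u⁻¹ 1 1 = u 0 0 := by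
  rw [Matrix.SpecialLinearGroup.SL2_inv_expl u]
  refine ⟨?_, ?_, ?_, ?_⟩ <;> rfl

end Aux3

/-- If a sequence `(γₙ)` in `PSL(2, ℝ)` satisfies `γₙ·z → η⁺` and `γₙ⁻¹·z → η⁻` in the
compactification `ℍ ∪ ∂ℍ ⊆ ℂ ∪ {∞}` for every `z ∈ ℍ`, then `γₙ(ξ) → η⁺` for every
boundary point `ξ ≠ η⁻`. -/
theorem tendsto_boundary_of_tendsto_interior
    (γ : ℕ → PSL2) (ηp ηm : Bdry)
    (h : ∀ z : ℍ,
      Tendsto (fun n => hToC (hact (γ n) z)) atTop (𝓝 (bToC ηp)) ∧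
      Tendsto (fun n => hToC (hact (γ n)⁻¹ z)) atTop (𝓝 (bToC ηm))) :
    ∀ ξ : Bdry, ξ ≠ ηm → Tendsto (fun n => mob (γ n) ξ) atTop (𝓝 ηp) := by
  classical
  intro ξ hξ
  set zI : ℍ := UpperHalfPlane.I with hzI
  have hzim : (zI : ℂ).im ≠ 0 := by
    rw [UpperHalfPlane.coe_im]
    exact zI.im_pos.ne'
  have Hp : Tendsto (fun n => hToC (rep (γ n) • zI)) atTop (𝓝 (bToC ηp)) := (h zI).1
  have Hm : Tendsto (fun n => hToC ((rep (γ n))⁻¹ • zI)) atTop (𝓝 (bToC ηm)) := by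
    refine ((h zI).2).congr fun n => ?_
    show hToC (rep ((γ n)⁻¹) • zI) = _
    congr 1
    refine smul_eq_of_pr_eq ?_ zI
    rw [pr_rep, map_inv, pr_rep]
  have hdet : ∀ n, rep (γ n) 0 0 * rep (γ n) 1 1 - rep (γ n) 0 1 * rep (γ n) 1 0 = 1 := by
    intro n
    have h2 := (rep (γ n)).2
    rwa [Matrix.det_fin_two] at h2
  set S : ℕ → ℝ :=
    fun n => rep (γ n) 0 0 ^ 2 + rep (γ n) 0 1 ^ 2 + rep (γ n) 1 0 ^ 2 + rep (γ n) 1 1 ^ 2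
    with hSdef
  have hS2 : ∀ n, 2 ≤ S n := by
    intro n
    simp only [hSdef]
    nlinarith [hdet n, sq_nonneg (rep (γ n) 0 0 - rep (γ n) 1 1),
      sq_nonneg (rep (γ n) 0 1 + rep (γ n) 1 0)]
  set N : ℕ → ℝ := fun n => Real.sqrt (S n) with hNdef
  have hNpos : ∀ n, 0 < N n := by
    intro n
    rw [hNdef]
    exact Real.sqrt_pos.mpr (by linarith [hS2 n])
  have hNsq : ∀ n, N n ^ 2 = S n := by
    intro n
    rw [hNdef]
    exact Real.sq_sqrt (by linarith [hS2 n])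
  have hsq00 : ∀ n, rep (γ n) 0 0 ^ 2 ≤ S n := by
    intro n
    simp only [hSdef]
    nlinarith [sq_nonneg (rep (γ n) 0 1), sq_nonneg (rep (γ n) 1 0), sq_nonneg (rep (γ n) 1 1)]
  have hsq01 : ∀ n, rep (γ n) 0 1 ^ 2 ≤ S n := by
    intro n
    simp only [hSdef]
    nlinarith [sq_nonneg (rep (γ n) 0 0), sq_nonneg (rep (γ n) 1 0), sq_nonneg (rep (γ n) 1 1)]
  have hsq10 : ∀ n, rep (γ n) 1 0 ^ 2 ≤ S n := by
    intro n
    simp only [hSdef]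
    nlinarith [sq_nonneg (rep (γ n) 0 0), sq_nonneg (rep (γ n) 0 1), sq_nonneg (rep (γ n) 1 1)]
  have hsq11 : ∀ n, rep (γ n) 1 1 ^ 2 ≤ S n := by
    intro n
    simp only [hSdef]
    nlinarith [sq_nonneg (rep (γ n) 0 0), sq_nonneg (rep (γ n) 0 1), sq_nonneg (rep (γ n) 1 0)]
  have habsle : ∀ (e : ℝ) n, e ^ 2 ≤ S n → |e| ≤ N n := by
    intro e n he
    rw [hNdef, ← Real.sqrt_sq_eq_abs]
    exact Real.sqrt_le_sqrt he
  -- Step A : S tends to infinity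
  have hStop : Tendsto S atTop atTop := by
    by_contra hcon
    rw [tendsto_atTop] at hcon
    push_neg at hcon
    obtain ⟨M, hM⟩ := hcon
    obtain ⟨φ, hφmono, hφ⟩ := Filter.extraction_of_frequently_atTop hM
    have hφb : ∀ n, S (φ n) ≤ M := fun n => (hφ n).le
    have hMb : ∀ n i, |![rep (γ (φ n)) 0 0, rep (γ (φ n)) 0 1,
        rep (γ (φ n)) 1 0, rep (γ (φ n)) 1 1] i| ≤ Real.sqrt M := by
      intro n i
      rw [← Real.sqrt_sq_eq_abs]
      apply Real.sqrt_le_sqrt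
      fin_cases i
      · simpa using le_trans (hsq00 (φ n)) (hφb n)
      · simpa using le_trans (hsq01 (φ n)) (hφb n)
      · simpa using le_trans (hsq10 (φ n)) (hφb n)
      · simpa using le_trans (hsq11 (φ n)) (hφb n)
    obtain ⟨L, ψ, hψmono, hconv⟩ := exists_subseq_entries (Real.sqrt M) _ hMb
    have hc0 : Tendsto (fun n => rep (γ (φ (ψ n))) 0 0) atTop (𝓝 (L 0)) := by
      simpa using hconv 0
    have hc1 : Tendsto (fun n => rep (γ (φ (ψ n))) 0 1) atTop (𝓝 (L 1)) := by
      simpa using hconv 1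
    have hc2 : Tendsto (fun n => rep (γ (φ (ψ n))) 1 0) atTop (𝓝 (L 2)) := by
      simpa using hconv 2
    have hc3 : Tendsto (fun n => rep (γ (φ (ψ n))) 1 1) atTop (𝓝 (L 3)) := by
      simpa using hconv 3
    have hdetlim : L 0 * L 3 - L 1 * L 2 = 1 := by
      refine tendsto_nhds_unique ((hc0.mul hc3).sub (hc1.mul hc2)) ?_
      exact Tendsto.congr (fun n => (hdet (φ (ψ n))).symm) tendsto_const_nhds
    set glim : SL2 := ⟨!![L 0, L 1; L 2, L 3], by
      rw [Matrix.det_fin_two_of]; linarith⟩ with hglim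
    have hgl00 : glim 0 0 = L 0 := rfl
    have hgl01 : glim 0 1 = L 1 := rfl
    have hgl10 : glim 1 0 = L 2 := rfl
    have hgl11 : glim 1 1 = L 3 := rfl
    have hdlim : ((L 2 : ℝ) : ℂ) * (zI : ℂ) + ((L 3 : ℝ) : ℂ) ≠ 0 := by
      have hne := denom_ne_zero_SL2 glim zI
      rwa [hgl10, hgl11] at hne
    have hnum : Tendsto (fun n => ((rep (γ (φ (ψ n))) 0 0 : ℝ) : ℂ) * (zI : ℂ)
        + ((rep (γ (φ (ψ n))) 0 1 : ℝ) : ℂ)) atTop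
        (𝓝 (((L 0 : ℝ) : ℂ) * (zI : ℂ) + ((L 1 : ℝ) : ℂ))) :=
      (((Complex.continuous_ofReal.tendsto _).comp hc0).mul_const _).add
        ((Complex.continuous_ofReal.tendsto _).comp hc1)
    have hden : Tendsto (fun n => ((rep (γ (φ (ψ n))) 1 0 : ℝ) : ℂ) * (zI : ℂ)
        + ((rep (γ (φ (ψ n))) 1 1 : ℝ) : ℂ)) atTop
        (𝓝 (((L 2 : ℝ) : ℂ) * (zI : ℂ) + ((L 3 : ℝ) : ℂ))) :=
      (((Complex.continuous_ofReal.tendsto _).comp hc2).mul_const _).add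
        ((Complex.continuous_ofReal.tendsto _).comp hc3)
    have hflim : Tendsto (fun n => hToC (rep (γ (φ (ψ n))) • zI)) atTop
        (𝓝 (hToC (glim • zI))) := by
      apply ((OnePoint.continuous_coe (X := ℂ)).tendsto _).comp
      have key := hnum.div hden hdlim
      rw [coe_smul_SL2 glim zI, hgl00, hgl01, hgl10, hgl11]
      refine key.congr' ?_
      refine Eventually.of_forall fun n => ?_
      show (((rep (γ (φ (ψ n))) 0 0 : ℝ) : ℂ) * (zI : ℂ) + ((rep (γ (φ (ψ n))) 0 1 : ℝ) : ℂ)) /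
          (((rep (γ (φ (ψ n))) 1 0 : ℝ) : ℂ) * (zI : ℂ) + ((rep (γ (φ (ψ n))) 1 1 : ℝ) : ℂ))
          = ((rep (γ (φ (ψ n))) • zI : ℍ) : ℂ)
      rw [coe_smul_SL2 (rep (γ (φ (ψ n)))) zI]
    have hHpSub : Tendsto (fun n => hToC (rep (γ (φ (ψ n))) • zI)) atTop (𝓝 (bToC ηp)) :=
      Hp.comp (hφmono.comp hψmono).tendsto_atTop
    have heq : hToC (glim • zI) = bToC ηp := tendsto_nhds_unique hflim hHpSub
    exact hToC_ne_bToC (glim • zI) ηp heq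
  -- Step B : subsequence argument
  apply tendsto_of_subseq_tendsto
  intro ns hns
  have hMb : ∀ n i, |![rep (γ (ns n)) 0 0, rep (γ (ns n)) 0 1,
      rep (γ (ns n)) 1 0, rep (γ (ns n)) 1 1] i / N (ns n)| ≤ 1 := by
    intro n i
    rw [abs_div, abs_of_pos (hNpos _), div_le_one (hNpos _)]
    apply habsle
    fin_cases i
    · simpa using hsq00 (ns n)
    · simpa using hsq01 (ns n)
    · simpa using hsq10 (ns n)
    · simpa using hsq11 (ns n)
  obtain ⟨L, ψ, hψmono, hconv⟩ := exists_subseq_entries 1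
    (fun n i => ![rep (γ (ns n)) 0 0, rep (γ (ns n)) 0 1,
      rep (γ (ns n)) 1 0, rep (γ (ns n)) 1 1] i / N (ns n)) hMb
  refine ⟨ψ, ?_⟩
  have hφtop : Tendsto (fun n => ns (ψ n)) atTop atTop := hns.comp hψmono.tendsto_atTop
  have hA : Tendsto (fun n => rep (γ (ns (ψ n))) 0 0 / N (ns (ψ n))) atTop (𝓝 (L 0)) := by
    simpa using hconv 0
  have hB : Tendsto (fun n => rep (γ (ns (ψ n))) 0 1 / N (ns (ψ n))) atTop (𝓝 (L 1)) := by
    simpa using hconv 1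
  have hC : Tendsto (fun n => rep (γ (ns (ψ n))) 1 0 / N (ns (ψ n))) atTop (𝓝 (L 2)) := by
    simpa using hconv 2
  have hD : Tendsto (fun n => rep (γ (ns (ψ n))) 1 1 / N (ns (ψ n))) atTop (𝓝 (L 3)) := by
    simpa using hconv 3
  have hsum1 : L 0 ^ 2 + L 1 ^ 2 + L 2 ^ 2 + L 3 ^ 2 = 1 := by
    have h1 := (((hA.pow 2).add (hB.pow 2)).add (hC.pow 2)).add (hD.pow 2)
    refine tendsto_nhds_unique h1 ?_
    refine Tendsto.congr (fun n => ?_) (tendsto_const_nhds (x := (1 : ℝ)))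
    have hs := hNsq (ns (ψ n))
    have hn0 := (hNpos (ns (ψ n))).ne'
    have hSn : S (ns (ψ n)) = rep (γ (ns (ψ n))) 0 0 ^ 2 + rep (γ (ns (ψ n))) 0 1 ^ 2
        + rep (γ (ns (ψ n))) 1 0 ^ 2 + rep (γ (ns (ψ n))) 1 1 ^ 2 := by rw [hSdef]
    field_simp
    linarith [hs.trans hSn]
  have hdet0 : L 0 * L 3 - L 1 * L 2 = 0 := by
    have h1 := (hA.mul hD).sub (hB.mul hC)
    refine tendsto_nhds_unique h1 ?_
    have h3 : Tendsto (fun n => (S (ns (ψ n)))⁻¹) atTop (𝓝 0) :=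
      tendsto_inv_atTop_zero.comp (hStop.comp hφtop)
    refine Tendsto.congr (fun n => ?_) h3
    have hn0 := (hNpos (ns (ψ n))).ne'
    calc (S (ns (ψ n)))⁻¹ = 1 / S (ns (ψ n)) := (one_div _).symm
      _ = (rep (γ (ns (ψ n))) 0 0 * rep (γ (ns (ψ n))) 1 1
            - rep (γ (ns (ψ n))) 0 1 * rep (γ (ns (ψ n))) 1 0) / N (ns (ψ n)) ^ 2 := by
          rw [hdet (ns (ψ n)), hNsq (ns (ψ n))]
      _ = rep (γ (ns (ψ n))) 0 0 / N (ns (ψ n)) * (rep (γ (ns (ψ n))) 1 1 / N (ns (ψ n)))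
            - rep (γ (ns (ψ n))) 0 1 / N (ns (ψ n))
              * (rep (γ (ns (ψ n))) 1 0 / N (ns (ψ n))) := by ring
  -- complex limits at z = I
  have hofR : ∀ {u : ℕ → ℝ} {l : ℝ}, Tendsto u atTop (𝓝 l) →
      Tendsto (fun n => ((u n : ℝ) : ℂ)) atTop (𝓝 ((l : ℝ) : ℂ)) :=
    fun hu => (Complex.continuous_ofReal.tendsto _).comp hu
  have hnum1 : Tendsto (fun n => (((rep (γ (ns (ψ n))) 0 0 : ℝ) : ℂ) * (zI : ℂ)
      + ((rep (γ (ns (ψ n))) 0 1 : ℝ) : ℂ)) / ((N (ns (ψ n)) : ℝ) : ℂ)) atTop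
      (𝓝 (((L 0 : ℝ) : ℂ) * (zI : ℂ) + ((L 1 : ℝ) : ℂ))) := by
    have h1 := ((hofR hA).mul_const ((zI : ℂ))).add (hofR hB)
    refine h1.congr fun n => ?_
    push_cast
    ring
  have hden1 : Tendsto (fun n => (((rep (γ (ns (ψ n))) 1 0 : ℝ) : ℂ) * (zI : ℂ)
      + ((rep (γ (ns (ψ n))) 1 1 : ℝ) : ℂ)) / ((N (ns (ψ n)) : ℝ) : ℂ)) atTop
      (𝓝 (((L 2 : ℝ) : ℂ) * (zI : ℂ) + ((L 3 : ℝ) : ℂ))) := by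
    have h1 := ((hofR hC).mul_const ((zI : ℂ))).add (hofR hD)
    refine h1.congr fun n => ?_
    push_cast
    ring
  have hNme : ∀ n, ((N (ns (ψ n)) : ℝ) : ℂ) ≠ 0 :=
    fun n => Complex.ofReal_ne_zero.mpr (hNpos (ns (ψ n))).ne'
  have hcoe1 : ∀ n, ((rep (γ (ns (ψ n))) • zI : ℍ) : ℂ) =
      ((((rep (γ (ns (ψ n))) 0 0 : ℝ) : ℂ) * (zI : ℂ)
        + ((rep (γ (ns (ψ n))) 0 1 : ℝ) : ℂ)) / ((N (ns (ψ n)) : ℝ) : ℂ)) /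
      ((((rep (γ (ns (ψ n))) 1 0 : ℝ) : ℂ) * (zI : ℂ)
        + ((rep (γ (ns (ψ n))) 1 1 : ℝ) : ℂ)) / ((N (ns (ψ n)) : ℝ) : ℂ)) := by
    intro n
    rw [coe_smul_SL2, div_div_div_comm, div_self (hNme n), div_one]
  -- identification of ηp
  have caseP : (L 2 = 0 ∧ L 3 = 0 ∧ ηp = ∞) ∨
      (∃ r : ℝ, ηp = ((r : ℝ) : Bdry) ∧ L 0 = r * L 2 ∧ L 1 = r * L 3) := by
    have hHf : Tendsto (fun n => hToC (rep (γ (ns (ψ n))) • zI)) atTop (𝓝 (bToC ηp)) :=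
      Hp.comp hφtop
    by_cases hde : ((L 2 : ℝ) : ℂ) * (zI : ℂ) + ((L 3 : ℝ) : ℂ) = 0
    · obtain ⟨hC0, hD0⟩ := real_combo_eq_zero hzim hde
      left
      refine ⟨hC0, hD0, ?_⟩
      have hnu0 : ((L 0 : ℝ) : ℂ) * (zI : ℂ) + ((L 1 : ℝ) : ℂ) ≠ 0 := by
        intro h0
        obtain ⟨hA0, hB0⟩ := real_combo_eq_zero hzim h0
        rw [hA0, hB0, hC0, hD0] at hsum1
        norm_num at hsum1
      have h2 : Tendsto (fun n => ‖(((rep (γ (ns (ψ n))) 1 0 : ℝ) : ℂ) * (zI : ℂ)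
          + ((rep (γ (ns (ψ n))) 1 1 : ℝ) : ℂ)) / ((N (ns (ψ n)) : ℝ) : ℂ)‖) atTop (𝓝 0) := by
        rw [hde] at hden1
        simpa using hden1.norm
      have h3 : Tendsto (fun n => ‖(((rep (γ (ns (ψ n))) 1 0 : ℝ) : ℂ) * (zI : ℂ)
          + ((rep (γ (ns (ψ n))) 1 1 : ℝ) : ℂ)) / ((N (ns (ψ n)) : ℝ) : ℂ)‖⁻¹) atTop atTop := by
        apply tendsto_inv_nhdsGT_zero.comp
        apply tendsto_nhdsWithin_of_tendsto_nhds_of_eventually_within _ h2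
        refine Eventually.of_forall fun n => ?_
        exact Set.mem_Ioi.mpr (norm_pos_iff.mpr
          (div_ne_zero (denom_ne_zero_SL2 (rep (γ (ns (ψ n)))) zI) (hNme n)))
      have h4 := Filter.Tendsto.pos_mul_atTop (norm_pos_iff.mpr hnu0) hnum1.norm h3
      have hnorm : Tendsto (fun n => ‖((rep (γ (ns (ψ n))) • zI : ℍ) : ℂ)‖) atTop atTop := by
        refine h4.congr fun n => ?_
        simp only [hcoe1 n, norm_div]
        ring
      have hinf : Tendsto (fun n => hToC (rep (γ (ns (ψ n))) • zI)) atTop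
          (𝓝 (∞ : OnePoint ℂ)) := tendsto_onePoint_infty_of_norm hnorm
      have heq := tendsto_nhds_unique hHf hinf
      cases ηp with
      | none => rfl
      | some x => exact absurd heq (OnePoint.coe_ne_infty ((x : ℝ) : ℂ))
    · right
      have hq : Tendsto (fun n => ((rep (γ (ns (ψ n))) • zI : ℍ) : ℂ)) atTop
          (𝓝 ((((L 0 : ℝ) : ℂ) * (zI : ℂ) + ((L 1 : ℝ) : ℂ)) /
            (((L 2 : ℝ) : ℂ) * (zI : ℂ) + ((L 3 : ℝ) : ℂ)))) :=
        (hnum1.div hden1 hde).congr fun n => (hcoe1 n).symm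
      have hq2 := ((OnePoint.continuous_coe (X := ℂ)).tendsto _).comp hq
      have heq := tendsto_nhds_unique hHf hq2
      cases ηp with
      | none => exact absurd heq (OnePoint.infty_ne_coe _)
      | some r =>
        have heq' : (((r : ℝ) : ℂ) : OnePoint ℂ) = (((((L 0 : ℝ) : ℂ) * (zI : ℂ)
            + ((L 1 : ℝ) : ℂ)) / (((L 2 : ℝ) : ℂ) * (zI : ℂ) + ((L 3 : ℝ) : ℂ))) :
            OnePoint ℂ) := heq
        have hrd := OnePoint.coe_eq_coe.mp heq'
        rw [eq_div_iff hde] at hrd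
        obtain ⟨h1, h2⟩ := combo_real (A := L 0) (B := L 1) (C := L 2) (D := L 3) (r := r)
          hzim (by push_cast; linear_combination hrd.symm)
        exact ⟨r, rfl, h1, h2⟩
  -- identification of ηm
  have hcoe2 : ∀ n, (((rep (γ (ns (ψ n))))⁻¹ • zI : ℍ) : ℂ) =
      ((((rep (γ (ns (ψ n))) 1 1 : ℝ) : ℂ) * (zI : ℂ)
        - ((rep (γ (ns (ψ n))) 0 1 : ℝ) : ℂ)) / ((N (ns (ψ n)) : ℝ) : ℂ)) /
      ((-((rep (γ (ns (ψ n))) 1 0 : ℝ) : ℂ) * (zI : ℂ)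
        + ((rep (γ (ns (ψ n))) 0 0 : ℝ) : ℂ)) / ((N (ns (ψ n)) : ℝ) : ℂ)) := by
    intro n
    rw [coe_smul_SL2]
    obtain ⟨e1, e2, e3, e4⟩ := inv_entries (rep (γ (ns (ψ n))))
    rw [e1, e2, e3, e4, div_div_div_comm, div_self (hNme n), div_one]
    push_cast
    ring
  have hnum2 : Tendsto (fun n => (((rep (γ (ns (ψ n))) 1 1 : ℝ) : ℂ) * (zI : ℂ)
      - ((rep (γ (ns (ψ n))) 0 1 : ℝ) : ℂ)) / ((N (ns (ψ n)) : ℝ) : ℂ)) atTop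
      (𝓝 (((L 3 : ℝ) : ℂ) * (zI : ℂ) - ((L 1 : ℝ) : ℂ))) := by
    have h1 := ((hofR hD).mul_const ((zI : ℂ))).sub (hofR hB)
    refine h1.congr fun n => ?_
    push_cast
    ring
  have hden2 : Tendsto (fun n => (-((rep (γ (ns (ψ n))) 1 0 : ℝ) : ℂ) * (zI : ℂ)
      + ((rep (γ (ns (ψ n))) 0 0 : ℝ) : ℂ)) / ((N (ns (ψ n)) : ℝ) : ℂ)) atTop
      (𝓝 (-((L 2 : ℝ) : ℂ) * (zI : ℂ) + ((L 0 : ℝ) : ℂ))) := by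
    have h1 := (((hofR hC).neg).mul_const ((zI : ℂ))).add (hofR hA)
    refine h1.congr fun n => ?_
    push_cast
    ring
  have hdinv : ∀ n, (-((rep (γ (ns (ψ n))) 1 0 : ℝ) : ℂ) * (zI : ℂ)
      + ((rep (γ (ns (ψ n))) 0 0 : ℝ) : ℂ)) ≠ 0 := by
    intro n
    have hne := denom_ne_zero_SL2 (rep (γ (ns (ψ n))))⁻¹ zI
    obtain ⟨e1, e2, e3, e4⟩ := inv_entries (rep (γ (ns (ψ n))))
    rw [e3, e4] at hne
    intro h0
    apply hne
    push_cast
    linear_combination h0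
  have caseM : (L 0 = 0 ∧ L 2 = 0 ∧ ηm = ∞) ∨
      (∃ s : ℝ, ηm = ((s : ℝ) : Bdry) ∧ L 1 = -(s * L 0) ∧ L 3 = -(s * L 2)) := by
    have hHf : Tendsto (fun n => hToC ((rep (γ (ns (ψ n))))⁻¹ • zI)) atTop (𝓝 (bToC ηm)) :=
      Hm.comp hφtop
    by_cases hde : -((L 2 : ℝ) : ℂ) * (zI : ℂ) + ((L 0 : ℝ) : ℂ) = 0
    · obtain ⟨hC0, hA0⟩ := real_combo_eq_zero hzim
        (show ((-L 2 : ℝ) : ℂ) * (zI : ℂ) + ((L 0 : ℝ) : ℂ) = 0 by push_cast; linear_combination hde)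
      left
      have hC0' : L 2 = 0 := by linarith [neg_eq_zero.mp hC0]
      refine ⟨hA0, hC0', ?_⟩
      have hnu0 : ((L 3 : ℝ) : ℂ) * (zI : ℂ) - ((L 1 : ℝ) : ℂ) ≠ 0 := by
        intro h0
        obtain ⟨hD0, hB0⟩ := real_combo_eq_zero (C := L 3) (D := -L 1) hzim
          (by push_cast; linear_combination h0)
        rw [hA0, hC0', hD0, show L 1 = 0 by linarith] at hsum1
        norm_num at hsum1
      have h2 : Tendsto (fun n => ‖(-((rep (γ (ns (ψ n))) 1 0 : ℝ) : ℂ) * (zI : ℂ)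
          + ((rep (γ (ns (ψ n))) 0 0 : ℝ) : ℂ)) / ((N (ns (ψ n)) : ℝ) : ℂ)‖) atTop (𝓝 0) := by
        rw [hde] at hden2
        simpa using hden2.norm
      have h3 : Tendsto (fun n => ‖(-((rep (γ (ns (ψ n))) 1 0 : ℝ) : ℂ) * (zI : ℂ)
          + ((rep (γ (ns (ψ n))) 0 0 : ℝ) : ℂ)) / ((N (ns (ψ n)) : ℝ) : ℂ)‖⁻¹) atTop atTop := by
        apply tendsto_inv_nhdsGT_zero.comp
        apply tendsto_nhdsWithin_of_tendsto_nhds_of_eventually_within _ h2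
        refine Eventually.of_forall fun n => ?_
        exact Set.mem_Ioi.mpr (norm_pos_iff.mpr (div_ne_zero (hdinv n) (hNme n)))
      have h4 := Filter.Tendsto.pos_mul_atTop (norm_pos_iff.mpr hnu0) hnum2.norm h3
      have hnorm : Tendsto (fun n => ‖(((rep (γ (ns (ψ n))))⁻¹ • zI : ℍ) : ℂ)‖) atTop atTop := by
        refine h4.congr fun n => ?_
        simp only [hcoe2 n, norm_div]
        ring
      have hinf : Tendsto (fun n => hToC ((rep (γ (ns (ψ n))))⁻¹ • zI)) atTop
          (𝓝 (∞ : OnePoint ℂ)) := tendsto_onePoint_infty_of_norm hnorm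
      have heq := tendsto_nhds_unique hHf hinf
      cases ηm with
      | none => rfl
      | some x => exact absurd heq (OnePoint.coe_ne_infty ((x : ℝ) : ℂ))
    · right
      have hq : Tendsto (fun n => (((rep (γ (ns (ψ n))))⁻¹ • zI : ℍ) : ℂ)) atTop
          (𝓝 ((((L 3 : ℝ) : ℂ) * (zI : ℂ) - ((L 1 : ℝ) : ℂ)) /
            (-((L 2 : ℝ) : ℂ) * (zI : ℂ) + ((L 0 : ℝ) : ℂ)))) :=
        (hnum2.div hden2 hde).congr fun n => (hcoe2 n).symm
      have hq2 := ((OnePoint.continuous_coe (X := ℂ)).tendsto _).comp hq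
      have heq := tendsto_nhds_unique hHf hq2
      cases ηm with
      | none => exact absurd heq (OnePoint.infty_ne_coe _)
      | some s =>
        have heq' : (((s : ℝ) : ℂ) : OnePoint ℂ) = (((((L 3 : ℝ) : ℂ) * (zI : ℂ)
            - ((L 1 : ℝ) : ℂ)) / (-((L 2 : ℝ) : ℂ) * (zI : ℂ) + ((L 0 : ℝ) : ℂ))) :
            OnePoint ℂ) := heq
        have hrd := OnePoint.coe_eq_coe.mp heq'
        rw [eq_div_iff hde] at hrd
        obtain ⟨h1, h2⟩ := combo_real (A := L 3) (B := -L 1) (C := -L 2) (D := L 0) (r := s)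
          hzim (by push_cast; linear_combination hrd.symm)
        exact ⟨s, rfl, by linarith, by linarith⟩
  -- final case analysis on ξ
  have hNposφ : ∀ n, 0 < N (ns (ψ n)) := fun n => hNpos (ns (ψ n))
  induction ξ using OnePoint.rec with
  | infty =>
    have hmobeq : ∀ n, (if rep (γ (ns (ψ n))) 1 0 = 0 then (∞ : Bdry)
        else ((rep (γ (ns (ψ n))) 0 0 / rep (γ (ns (ψ n))) 1 0 : ℝ) : Bdry))
        = mob (γ (ns (ψ n))) (∞ : Bdry) := fun n => rfl
    rcases caseM with ⟨hA0, hC0, hm⟩ | ⟨s, hms, hBs, hDs⟩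
    · exact absurd hm.symm hξ
    · rcases caseP with ⟨hC0, hD0, hp⟩ | ⟨r, hpr, hAr, hBr⟩
      · have hL0 : L 0 ≠ 0 := by
          intro h0
          rw [hBs, h0, hC0, hD0] at hsum1
          norm_num at hsum1
        rw [hp]
        refine Tendsto.congr (fun n => hmobeq n) ?_
        refine bdry_helper_inf hNposφ hA ?_ hL0
        rw [hC0] at hC
        exact hC
      · have hL2 : L 2 ≠ 0 := by
          intro h0
          rw [hAr, h0, mul_zero] at hBs
          rw [hAr, h0, mul_zero, hBs, hDs, h0] at hsum1
          norm_num at hsum1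
        rw [hpr]
        have hfin := bdry_helper_fin hNposφ hA hC hL2
        have hval : L 0 / L 2 = r := by rw [hAr]; field_simp
        rw [hval] at hfin
        exact Tendsto.congr (fun n => hmobeq n) hfin
  | coe x =>
    have hmobeq : ∀ n, (if rep (γ (ns (ψ n))) 1 0 * x + rep (γ (ns (ψ n))) 1 1 = 0
        then (∞ : Bdry)
        else (((rep (γ (ns (ψ n))) 0 0 * x + rep (γ (ns (ψ n))) 0 1) /
          (rep (γ (ns (ψ n))) 1 0 * x + rep (γ (ns (ψ n))) 1 1) : ℝ) : Bdry))
        = mob (γ (ns (ψ n))) ((x : ℝ) : Bdry) := fun n => rfl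
    have hnumx : Tendsto (fun n => (rep (γ (ns (ψ n))) 0 0 * x + rep (γ (ns (ψ n))) 0 1)
        / N (ns (ψ n))) atTop (𝓝 (L 0 * x + L 1)) := by
      refine ((hA.mul_const x).add hB).congr fun n => ?_
      ring
    have hdenx : Tendsto (fun n => (rep (γ (ns (ψ n))) 1 0 * x + rep (γ (ns (ψ n))) 1 1)
        / N (ns (ψ n))) atTop (𝓝 (L 2 * x + L 3)) := by
      refine ((hC.mul_const x).add hD).congr fun n => ?_
      ring
    rcases caseP with ⟨hC0, hD0, hp⟩ | ⟨r, hpr, hAr, hBr⟩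
    · have hdex0 : L 2 * x + L 3 = 0 := by rw [hC0, hD0]; ring
      have hnux0 : L 0 * x + L 1 ≠ 0 := by
        rcases caseM with ⟨hA0, hC0', hm⟩ | ⟨s, hms, hBs, hDs⟩
        · intro h0
          rw [hA0, zero_mul, zero_add] at h0
          rw [hA0, h0, hC0, hD0] at hsum1
          norm_num at hsum1
        · have hxs : x ≠ s := by
            intro he
            exact hξ (by rw [hms, he])
          have hL0 : L 0 ≠ 0 := by
            intro h0
            rw [h0, hC0, hD0, hBs, h0] at hsum1
            norm_num at hsum1
          intro h0
          rw [hBs] at h0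
          have : L 0 * (x - s) = 0 := by ring_nf; ring_nf at h0; linarith
          rcases mul_eq_zero.mp this with h' | h'
          · exact hL0 h'
          · exact hxs (by linarith)
      rw [hp]
      refine Tendsto.congr (fun n => hmobeq n) ?_
      refine bdry_helper_inf hNposφ hnumx ?_ hnux0
      rw [hdex0] at hdenx
      exact hdenx
    · have hrel : L 0 * x + L 1 = r * (L 2 * x + L 3) := by rw [hAr, hBr]; ring
      have hdex0 : L 2 * x + L 3 ≠ 0 := by
        rcases caseM with ⟨hA0, hC0', hm⟩ | ⟨s, hms, hBs, hDs⟩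
        · intro h0
          rw [hC0', zero_mul, zero_add] at h0
          rw [hA0, hC0', h0, hBr, h0, mul_zero] at hsum1
          norm_num at hsum1
        · have hxs : x ≠ s := by
            intro he
            exact hξ (by rw [hms, he])
          intro h0
          rw [hDs] at h0
          have h2 : L 2 * (x - s) = 0 := by ring_nf; ring_nf at h0; linarith
          have hL2 : L 2 = 0 := by
            rcases mul_eq_zero.mp h2 with h' | h'
            · exact h'
            · exact absurd (by linarith : x = s) hxs
          rw [hAr, hBr, hDs, hL2] at hsum1
          norm_num at hsum1
      rw [hpr]
      have hfin := bdry_helper_fin hNposφ hnumx hdenx hdex0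
      have hval : (L 0 * x + L 1) / (L 2 * x + L 3) = r := by rw [hrel]; field_simp
      rw [hval] at hfin
      exact Tendsto.congr (fun n => hmobeq n) hfin
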